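/- (Comparing the oracles: CDF bound) Let Y = μ(X) + ε with ε independent of X, ε having a symmetric density about 0 that is nonincreasing on [0,∞), with density f of |ε| having derivative uniformly bounded in absolute value by M > 0. Let μ̂_n be any estimator (independent of (X,Y)), Δ_n(x) = μ̂_n(x) - μ(x), F the CDF of |ε|, and F_n the CDF of |Y - μ̂_n(X)|. Then sup_{t>0} |F_n(t) - F(t)| ≤ (M/2)·E[Δ_n(X)^2], where the expectation is over the randomness of μ̂_n and X. -/

import Mathlib

open MeasureTheory

open intervalIntegral in

lemma oracle_cdf_key_shift (g : ℝ → ℝ) (hg : Continuous g) (hsym : ∀ x, g (-x) = g x)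
    (L : ℝ) (hL : 0 ≤ L) (hlip : ∀ x y, |g x - g y| ≤ L * |x - y|) (t d : ℝ) :
    |(∫ x in (d-t)..(d+t), g x) - ∫ x in (-t)..t, g x| ≤ L * d ^ 2 := by
  have hii : ∀ a b : ℝ, IntervalIntegrable g volume a b := fun a b =>
    hg.intervalIntegrable a b
  have c1 : Continuous fun s : ℝ => g (s + t) := hg.comp (continuous_id.add continuous_const)
  have c2 : Continuous fun s : ℝ => g (t - s) := hg.comp (continuous_const.sub continuous_id)
  have hsplit : (∫ x in (d-t)..(d+t), g x)
      = ((∫ x in (d-t)..(-t), g x) + ∫ x in (-t)..t, g x) + ∫ x in t..(d+t), g x := by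
    rw [intervalIntegral.integral_add_adjacent_intervals (hii _ _) (hii _ _),
      intervalIntegral.integral_add_adjacent_intervals (hii _ _) (hii _ _)]
  have h1 : (∫ x in t..(d+t), g x) = ∫ s in (0:ℝ)..d, g (s + t) := by
    rw [intervalIntegral.integral_comp_add_right, zero_add]
  have h2 : (∫ x in (d-t)..(-t), g x) = - ∫ s in (0:ℝ)..d, g (t - s) := by
    have e1 : (∫ s in (0:ℝ)..d, g (t - s)) = ∫ s in (0:ℝ)..d, g (s + (-t)) := by
      congr 1; funext s; rw [← hsym (t - s)]; ring_nf
    rw [intervalIntegral.integral_symm, e1, intervalIntegral.integral_comp_add_right, zero_add,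
      show d + -t = d - t from by ring]
  have hrepr : (∫ x in (d-t)..(d+t), g x) - (∫ x in (-t)..t, g x)
      = ∫ s in (0:ℝ)..d, (g (s + t) - g (t - s)) := by
    rw [intervalIntegral.integral_sub (c1.intervalIntegrable _ _) (c2.intervalIntegrable _ _),
      hsplit, h1, h2]
    ring
  rw [hrepr]
  have hbound : ∀ s : ℝ, |g (s + t) - g (t - s)| ≤ (2 * L) * |s| := by
    intro s
    calc |g (s + t) - g (t - s)| ≤ L * |(s + t) - (t - s)| := hlip _ _
      _ = (2 * L) * |s| := by
          rw [show (s + t) - (t - s) = 2 * s from by ring, abs_mul, abs_two]; ring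
  have hcont : Continuous fun s => g (s + t) - g (t - s) := c1.sub c2
  rcases le_total 0 d with hd | hd
  · calc |∫ s in (0:ℝ)..d, (g (s + t) - g (t - s))|
        ≤ ∫ s in (0:ℝ)..d, |g (s + t) - g (t - s)| :=
          intervalIntegral.abs_integral_le_integral_abs hd
      _ ≤ ∫ s in (0:ℝ)..d, (2 * L) * s := by
          apply intervalIntegral.integral_mono_on hd
            ((hcont.abs).intervalIntegrable _ _)
            ((continuous_const.mul continuous_id').intervalIntegrable _ _)
          intro s hs
          exact (hbound s).trans (by rw [abs_of_nonneg hs.1]; exact le_rfl)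
      _ = L * d ^ 2 := by
          rw [intervalIntegral.integral_const_mul, integral_id]; ring
  · rw [intervalIntegral.integral_symm d 0, abs_neg]
    calc |∫ s in d..(0:ℝ), (g (s + t) - g (t - s))|
        ≤ ∫ s in d..(0:ℝ), |g (s + t) - g (t - s)| :=
          intervalIntegral.abs_integral_le_integral_abs hd
      _ ≤ ∫ s in d..(0:ℝ), (2 * L) * (-s) := by
          apply intervalIntegral.integral_mono_on hd
            ((hcont.abs).intervalIntegrable _ _)
            ((continuous_const.mul continuous_neg).intervalIntegrable _ _)
          intro s hs
          exact (hbound s).trans (by rw [abs_of_nonpos hs.2]; exact le_rfl)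
      _ = L * d ^ 2 := by
          simp only [mul_neg, intervalIntegral.integral_neg, intervalIntegral.integral_const_mul,
            integral_id]
          rw [intervalIntegral.integral_const_mul, integral_id]
          ring

/-- Comparing the oracles: CDF bound: let `Y = μ(X) + ε` with
`ε ~ f₀ dx` independent of `X`, `f₀` symmetric about `0` and nonincreasing on
`[0,∞)`; the density `f = 2 f₀` of `|ε|` has derivative uniformly bounded by `M`.
The estimator `μ̂` (indexed by an independent source of randomness `T` with law `ν`,
hence independent of `(X,Y)`) has estimation error `Δ(x) = μ̂(x) - μ(x)`. With
`F` the CDF of `|ε|` and `F_n` the CDF of `|Y - μ̂(X)|`, we have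
`sup_{t>0} |F_n(t) - F(t)| ≤ (M/2)·E[Δ(X)²]`, the expectation being over the
randomness of `μ̂` and `X`. -/
theorem oracle_cdf_bound
    {T E : Type*} [MeasurableSpace T] [MeasurableSpace E]
    (ν : Measure T) [IsProbabilityMeasure ν]
    (Px : Measure E) [IsProbabilityMeasure Px]
    (Pe : Measure ℝ) [IsProbabilityMeasure Pe]
    (f₀ : ℝ → ℝ)
    (hPe : Pe = volume.withDensity fun t => ENNReal.ofReal (f₀ t))
    (hsymm : ∀ t, f₀ (-t) = f₀ t)
    (hmono : AntitoneOn f₀ (Set.Ici (0 : ℝ)))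
    (M : ℝ) (hM : 0 < M)
    (hdiff : Differentiable ℝ f₀)
    (hderiv : ∀ t, |deriv (fun s => 2 * f₀ s) t| ≤ M)
    (μReg : E → ℝ) (hmreg : Measurable μReg)
    (μhat : T → E → ℝ)
    (hmeas : Measurable fun p : T × E => μhat p.1 p.2)
    (hint : Integrable (fun p : T × E => (μhat p.1 p.2 - μReg p.2) ^ 2) (ν.prod Px)) :
    ∀ t > (0 : ℝ),
      |((ν.prod (Px.prod Pe))
            {p : T × E × ℝ | |μReg p.2.1 + p.2.2 - μhat p.1 p.2.1| ≤ t}).toReal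
          - (Pe {e : ℝ | |e| ≤ t}).toReal|
        ≤ (M / 2) * ∫ p : T × E, (μhat p.1 p.2 - μReg p.2) ^ 2 ∂(ν.prod Px) := by
  intro t ht
  classical
  set g : ℝ → ℝ := fun x => max (f₀ x) 0 with hg_def
  have hg_nonneg : ∀ x, 0 ≤ g x := fun x => le_max_right _ _
  have hg_cont : Continuous g := hdiff.continuous.max continuous_const
  have hg_symm : ∀ x, g (-x) = g x := fun x => by simp only [hg_def, hsymm x]
  have hderiv2 : ∀ z, |deriv f₀ z| ≤ M / 2 := by
    intro z
    have h2 : deriv (fun s => 2 * f₀ s) z = 2 * deriv f₀ z := by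
      rw [deriv_const_mul _ (hdiff z)]
    have := hderiv z
    rw [h2, abs_mul, abs_two] at this
    linarith
  have hlip0 : ∀ x y : ℝ, |f₀ x - f₀ y| ≤ (M / 2) * |x - y| := by
    intro x y
    have := Convex.norm_image_sub_le_of_norm_deriv_le (f := f₀) (s := (Set.univ : Set ℝ))
      (fun z _ => hdiff z) (fun z _ => by rw [Real.norm_eq_abs]; exact hderiv2 z)
      convex_univ (Set.mem_univ y) (Set.mem_univ x)
    simpa [Real.norm_eq_abs] using this
  have hlip : ∀ x y : ℝ, |g x - g y| ≤ (M / 2) * |x - y| := fun x y =>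
    (abs_max_sub_max_le_abs _ _ _).trans (hlip0 x y)
  have hPeIcc : ∀ a b : ℝ, a ≤ b →
      Pe (Set.Icc a b) = ENNReal.ofReal (∫ x in a..b, g x) := by
    intro a b hab
    rw [hPe, withDensity_apply _ measurableSet_Icc]
    have h1 : ∀ x : ℝ, ENNReal.ofReal (f₀ x) = ENNReal.ofReal (g x) := by
      intro x
      rcases le_total (f₀ x) 0 with h | h
      · rw [ENNReal.ofReal_of_nonpos h, hg_def]
        simp [max_eq_right h]
      · rw [hg_def]; simp [max_eq_left h]
    simp_rw [h1]
    rw [← ofReal_integral_eq_lintegral_ofReal hg_cont.integrableOn_Icc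
      (Filter.Eventually.of_forall fun x => hg_nonneg x)]
    rw [intervalIntegral.integral_of_le hab, MeasureTheory.integral_Icc_eq_integral_Ioc]
  have hkey : ∀ d : ℝ, |(∫ x in (d - t)..(d + t), g x) - ∫ x in (-t)..t, g x|
      ≤ (M / 2) * d ^ 2 :=
    fun d => oracle_cdf_key_shift g hg_cont hg_symm (M / 2) (by linarith) hlip t d
  set B : ℝ := ∫ x in (-t)..t, g x with hB_def
  have hB0 : 0 ≤ B := intervalIntegral.integral_nonneg (by linarith) fun x _ => hg_nonneg x
  have hSf : Measurable fun p : T × E × ℝ => |μReg p.2.1 + p.2.2 - μhat p.1 p.2.1| := by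
    apply Measurable.abs
    exact ((hmreg.comp (measurable_fst.comp measurable_snd)).add
      (measurable_snd.comp measurable_snd)).sub
      (hmeas.comp (measurable_fst.prodMk (measurable_fst.comp measurable_snd)))
  have hSmeas : MeasurableSet {p : T × E × ℝ | |μReg p.2.1 + p.2.2 - μhat p.1 p.2.1| ≤ t} :=
    hSf measurableSet_Iic
  set S' : Set ((T × E) × ℝ) :=
    (MeasurableEquiv.prodAssoc : (T × E) × ℝ ≃ᵐ T × E × ℝ) ⁻¹'
      {p : T × E × ℝ | |μReg p.2.1 + p.2.2 - μhat p.1 p.2.1| ≤ t} with hS'_def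
  have hS'meas : MeasurableSet S' := MeasurableEquiv.prodAssoc.measurable hSmeas
  have hassoc : (ν.prod (Px.prod Pe))
      {p : T × E × ℝ | |μReg p.2.1 + p.2.2 - μhat p.1 p.2.1| ≤ t}
      = ((ν.prod Px).prod Pe) S' :=
    ((measurePreserving_prodAssoc ν Px Pe).measure_preimage_equiv _).symm
  have hfiber : ∀ q : T × E, (Prod.mk q ⁻¹' S')
      = Set.Icc ((μhat q.1 q.2 - μReg q.2) - t) ((μhat q.1 q.2 - μReg q.2) + t) := by
    intro q
    ext e
    simp only [hS'_def, Set.mem_preimage, Set.mem_setOf_eq, Set.mem_Icc,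
      MeasurableEquiv.prodAssoc, MeasurableEquiv.coe_mk, Equiv.prodAssoc_apply, abs_le]
    constructor
    · rintro ⟨h1, h2⟩; constructor <;> linarith
    · rintro ⟨h1, h2⟩; constructor <;> linarith
  set Φ : T × E → ℝ := fun q =>
    ∫ x in ((μhat q.1 q.2 - μReg q.2) - t)..((μhat q.1 q.2 - μReg q.2) + t), g x with hΦ_def
  have hψcont : Continuous fun d : ℝ => ∫ x in (d - t)..(d + t), g x := by
    have hG : Continuous fun y : ℝ => ∫ x in (0:ℝ)..y, g x :=
      intervalIntegral.continuous_primitive (fun a b => (hg_cont.intervalIntegrable a b : IntervalIntegrable g volume a b)) 0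
    have hrw : ∀ d : ℝ, (∫ x in (d - t)..(d + t), g x)
        = (∫ x in (0:ℝ)..(d + t), g x) - ∫ x in (0:ℝ)..(d - t), g x := by
      intro d
      have h := intervalIntegral.integral_add_adjacent_intervals (μ := volume)
        (hg_cont.intervalIntegrable (d - t) 0) (hg_cont.intervalIntegrable 0 (d + t))
      have h2 : (∫ x in (d - t)..(0:ℝ), g x) = -∫ x in (0:ℝ)..(d - t), g x :=
        intervalIntegral.integral_symm 0 (d - t)
      linarith
    simp only [hrw]
    exact (hG.comp (continuous_id.add continuous_const)).sub
      (hG.comp (continuous_id.sub continuous_const))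
  have hδmeas : Measurable fun q : T × E => μhat q.1 q.2 - μReg q.2 :=
    hmeas.sub (hmreg.comp measurable_snd)
  have hΦmeas : Measurable Φ := hψcont.measurable.comp hδmeas
  have hΦkey : ∀ q, |Φ q - B| ≤ (M / 2) * (μhat q.1 q.2 - μReg q.2) ^ 2 := fun q => hkey _
  have hint2 : Integrable (fun q : T × E => (M / 2) * (μhat q.1 q.2 - μReg q.2) ^ 2)
      (ν.prod Px) := hint.const_mul _
  have hΦsubB : Integrable (fun q => Φ q - B) (ν.prod Px) := by
    apply hint2.mono' (hΦmeas.sub measurable_const).aestronglyMeasurable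
    exact Filter.Eventually.of_forall fun q => by
      rw [Real.norm_eq_abs]; exact hΦkey q
  have hΦint : Integrable Φ (ν.prod Px) := by
    have h := hΦsubB.add (integrable_const B)
    exact h.congr (Filter.Eventually.of_forall fun q => by simp [Pi.add_apply])
  have hΦnonneg : ∀ q, 0 ≤ Φ q := fun q =>
    intervalIntegral.integral_nonneg (by linarith) fun x _ => hg_nonneg x
  have hmain : ((ν.prod (Px.prod Pe))
      {p : T × E × ℝ | |μReg p.2.1 + p.2.2 - μhat p.1 p.2.1| ≤ t}).toReal
      = ∫ q, Φ q ∂(ν.prod Px) := by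
    rw [hassoc, Measure.prod_apply hS'meas]
    have hfib2 : ∀ q : T × E, Pe (Prod.mk q ⁻¹' S') = ENNReal.ofReal (Φ q) := by
      intro q
      rw [hfiber q, hPeIcc _ _ (by linarith)]
    simp_rw [hfib2]
    rw [← ofReal_integral_eq_lintegral_ofReal hΦint
      (Filter.Eventually.of_forall hΦnonneg),
      ENNReal.toReal_ofReal (integral_nonneg hΦnonneg)]
  have hPeB : (Pe {e : ℝ | |e| ≤ t}).toReal = B := by
    have hset : {e : ℝ | |e| ≤ t} = Set.Icc (-t) t := by
      ext e; simp [abs_le]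
    rw [hset, hPeIcc _ _ (by linarith), ENNReal.toReal_ofReal hB0]
  rw [hmain, hPeB]
  have hsub : (∫ q, Φ q ∂(ν.prod Px)) - B = ∫ q, (Φ q - B) ∂(ν.prod Px) := by
    rw [integral_sub hΦint (integrable_const B), integral_const]
    simp [measure_univ]
  rw [hsub]
  calc |∫ q, (Φ q - B) ∂(ν.prod Px)|
      ≤ ∫ q, |Φ q - B| ∂(ν.prod Px) := by
        simpa [Real.norm_eq_abs] using
          norm_integral_le_integral_norm (μ := ν.prod Px) (fun q => Φ q - B)
    _ ≤ ∫ q, (M / 2) * (μhat q.1 q.2 - μReg q.2) ^ 2 ∂(ν.prod Px) :=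
        integral_mono hΦsubB.abs hint2 fun q => hΦkey q
    _ = (M / 2) * ∫ p : T × E, (μhat p.1 p.2 - μReg p.2) ^ 2 ∂(ν.prod Px) :=
        integral_const_mul _ _
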